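/- arXiv:2003.04595 — 2 statements merged into one kernel-verified Lean document; each statement's English description precedes it below -/
import Mathlib

section
/- Let H be a real Hilbert space and J : H → ℝ ∪ {+∞} be a proper, convex, lower semi-continuous, absolutely one-homogeneous functional. Let u ∈ N(J)^⊥ \ {0}, let α satisfy 0 < α < J_*(u), and let v = prox_α^J(u). Then v ≠ 0 and J(v)/‖v‖ ≤ J(u)/‖u‖, with equality if and only if λ u ∈ ∂J(u) for λ = J(u)/‖u‖². -/
open scoped RealInnerProductSpace

noncomputable section

variable {H : Type*} [NormedAddCommGroup H] [InnerProductSpace ℝ H] [CompleteSpace H]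

/-- `J` is absolutely one-homogeneous: `J (c • u) = |c| * J u` for `c ≠ 0`, and `J 0 = 0`. -/
def AbsOneHom (J : H → EReal) : Prop :=
  J 0 = 0 ∧ ∀ c : ℝ, c ≠ 0 → ∀ u : H, J (c • u) = ((|c| : ℝ) : EReal) * J u

/-- Convexity of an extended-real-valued functional. -/
def ConvexFn (J : H → EReal) : Prop :=
  ∀ x y : H, ∀ t : ℝ, 0 ≤ t → t ≤ 1 →
    J (t • x + (1 - t) • y) ≤ ((t : ℝ) : EReal) * J x + (((1 - t) : ℝ) : EReal) * J y

/-- `J` is proper: it never takes the value `⊥` and is not identically `⊤`. -/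
def ProperFn (J : H → EReal) : Prop := (∀ u : H, J u ≠ ⊥) ∧ ∃ u : H, J u ≠ ⊤

/-- `u` is orthogonal to the null space `N(J) = {n : J n = 0}` of `J`. -/
def InNullPerp (J : H → EReal) (u : H) : Prop := ∀ n : H, J n = 0 → ⟪u, n⟫ = 0

/-- The objective `v ↦ ½‖v - u‖² + α J(v)` of the proximal problem for `J`. -/
def ProxObj (J : H → EReal) (α : ℝ) (u v : H) : EReal :=
  (((2 : ℝ)⁻¹ * ‖v - u‖ ^ 2 : ℝ) : EReal) + (α : EReal) * J v

/-- `v` is a minimizer of `w ↦ ½‖w - u‖² + α J(w)`, i.e. `v = prox_α^J(u)`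
(the minimizer is unique by strict convexity). -/
def IsProxPt (J : H → EReal) (α : ℝ) (u v : H) : Prop :=
  ∀ w : H, ProxObj J α u v ≤ ProxObj J α u w

/-- The dual quantity `J_*(u) = sup { ⟪u,p⟫ / J(p) : p ∈ N(J)^⊥, J(p) > 0 }`. -/
def Jdual (J : H → EReal) (u : H) : EReal :=
  ⨆ p : {p : H // InNullPerp J p ∧ 0 < J p}, ((⟪u, (p : H)⟫ : ℝ) : EReal) / J (p : H)

/-- `p` belongs to the subdifferential `∂J(u)`. -/
def InSubdiff (J : H → EReal) (u p : H) : Prop :=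
  ∀ v : H, J u + ((⟪p, v - u⟫ : ℝ) : EReal) ≤ J v

private lemma aux_pos_limit {A B : ℝ} (h : ∀ t : ℝ, 0 < t → t ≤ 1 → 0 ≤ A + t * B) :
    0 ≤ A := by
  by_contra hA
  push_neg at hA
  have hB1 : (0:ℝ) < 2 * (|B| + 1) := by positivity
  set t := min 1 (-A / (2 * (|B| + 1))) with ht
  have ht0 : 0 < t := lt_min one_pos (div_pos (by linarith) hB1)
  have ht1 : t ≤ 1 := min_le_left _ _
  have h2 : t ≤ -A / (2 * (|B| + 1)) := min_le_right _ _
  have h3 : t * (2 * (|B| + 1)) ≤ -A := (le_div_iff₀ hB1).mp h2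
  have h4 := h t ht0 ht1
  have h5 : t * B ≤ t * |B| := mul_le_mul_of_nonneg_left (le_abs_self B) ht0.le
  nlinarith

private lemma J_nonneg {J : H → EReal} (hproper : ProperFn J) (hconv : ConvexFn J)
    (hhom : AbsOneHom J) (w : H) : 0 ≤ J w := by
  have hneg : J (-w) = J w := by
    have h := hhom.2 (-1) (by norm_num) w
    simpa using h
  have h2 := hconv w (-w) (2⁻¹) (by norm_num) (by norm_num)
  have hz : (2⁻¹ : ℝ) • w + ((1 - 2⁻¹ : ℝ)) • (-w) = 0 := by
    norm_num [smul_neg]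
  rw [hz, hhom.1, hneg] at h2
  rcases eq_or_ne (J w) ⊤ with h | h
  · rw [h]; exact le_top
  · rw [← EReal.coe_toReal h (hproper.1 w)] at h2 ⊢
    rw [← EReal.coe_mul, ← EReal.coe_mul, ← EReal.coe_add] at h2
    have h3 : (0:ℝ) ≤ 2⁻¹ * (J w).toReal + (1 - 2⁻¹) * (J w).toReal := by exact_mod_cast h2
    have : (0:ℝ) ≤ (J w).toReal := by linarith
    exact_mod_cast this


set_option maxHeartbeats 2000000 in
/-- **Decrease of the Rayleigh quotient under the proximal operator.**
Let `J` be proper, convex, lsc, absolutely one-homogeneous, `u ∈ N(J)^⊥ \ {0}`,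
`0 < α < J_*(u)`, and let `v = prox_α^J(u)`. Then `v ≠ 0` and
`J(v)/‖v‖ ≤ J(u)/‖u‖`, with equality iff `λ • u ∈ ∂J(u)` for `λ = J(u)/‖u‖²`. -/
theorem rayleigh_decrease_of_prox
    (J : H → EReal) (hproper : ProperFn J) (hconv : ConvexFn J)
    (hlsc : LowerSemicontinuous J) (hhom : AbsOneHom J)
    (u : H) (hu : InNullPerp J u) (hu0 : u ≠ 0)
    (α : ℝ) (hα : 0 < α) (hαlt : (α : EReal) < Jdual J u)
    (v : H) (hv : IsProxPt J α u v) :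
    v ≠ 0 ∧
    J v / ((‖v‖ : ℝ) : EReal) ≤ J u / ((‖u‖ : ℝ) : EReal) ∧
    (J v / ((‖v‖ : ℝ) : EReal) = J u / ((‖u‖ : ℝ) : EReal) ↔
      InSubdiff J u (((J u).toReal / ‖u‖ ^ 2) • u)) := by
  obtain ⟨hJbot, w₀, hw₀⟩ := hproper
  have hhom1 := hhom.1
  have hJnn : ∀ w, 0 ≤ J w := J_nonneg ⟨hJbot, w₀, hw₀⟩ hconv hhom
  have hposhom : ∀ c : ℝ, 0 < c → ∀ w : H, J (c • w) = ((c:ℝ):EReal) * J w := by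
    intro c hc w
    rw [hhom.2 c hc.ne' w, abs_of_pos hc]
  have hnu : (0:ℝ) < ‖u‖ := norm_pos_iff.mpr hu0
  have hv' : ∀ w, ProxObj J α u v ≤ ProxObj J α u w := hv
  have hJ0 : J (0:H) = ((0:ℝ) : EReal) := by rw [hhom1, EReal.coe_zero]
  -- dual witness
  obtain ⟨⟨p, hpN, hpJ⟩, hp⟩ := lt_iSup_iff.mp hαlt
  simp only at hp
  have hpTop : J p ≠ ⊤ := by
    intro h
    rw [h, EReal.div_top] at hp
    have h0 : ((0:ℝ):EReal) < (α:EReal) := by exact_mod_cast hα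
    rw [EReal.coe_zero] at h0
    exact absurd hp (not_lt.mpr h0.le)
  set jp := (J p).toReal with hjpdef
  have hJp : J p = (jp : EReal) := (EReal.coe_toReal hpTop (hJbot p)).symm
  have hjp0 : (0:ℝ) < jp := by
    have h := hpJ; rw [hJp] at h; exact_mod_cast h
  have hup : α * jp < ⟪u, p⟫ := by
    rw [hJp, ← EReal.coe_div, EReal.coe_lt_coe_iff, lt_div_iff₀ hjp0] at hp
    exact hp
  have hnp : (0:ℝ) < ‖p‖ := by
    rw [norm_pos_iff]
    rintro rfl
    rw [hhom1] at hpJ; exact lt_irrefl 0 hpJ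
  -- J v is a (nonneg) real
  have hvTop : J v ≠ ⊤ := by
    intro h
    have h1 := hv' 0
    rw [ProxObj, ProxObj, hJ0, h, EReal.mul_top_of_pos (by exact_mod_cast hα)] at h1
    rw [EReal.add_top_of_ne_bot (EReal.coe_ne_bot _)] at h1
    have h2 : (((2:ℝ)⁻¹ * ‖(0:H) - u‖^2 : ℝ) : EReal) + (α:EReal) * ((0:ℝ):EReal) ≠ ⊤ := by
      rw [← EReal.coe_mul, ← EReal.coe_add]; exact EReal.coe_ne_top _
    exact h2 (top_le_iff.mp h1)
  set b := (J v).toReal with hbdef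
  have hJv : J v = (b : EReal) := (EReal.coe_toReal hvTop (hJbot v)).symm
  have hb0 : (0:ℝ) ≤ b := by
    have h := hJnn v; rw [hJv] at h; exact_mod_cast h
  -- real form of minimality
  have hreal : ∀ w : H, ∀ r : ℝ, J w = (r : EReal) →
      2⁻¹ * ‖v - u‖^2 + α * b ≤ 2⁻¹ * ‖w - u‖^2 + α * r := by
    intro w r hw
    have h := hv' w
    rw [ProxObj, ProxObj, hJv, hw, ← EReal.coe_mul, ← EReal.coe_mul, ← EReal.coe_add,
      ← EReal.coe_add, EReal.coe_le_coe_iff] at h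
    exact h
  -- v ≠ 0
  have hvne : v ≠ 0 := by
    intro hv0
    have hbz : b = 0 := by
      rw [hbdef, hv0, hhom1]; rfl
    set t := (⟪u, p⟫ - α * jp) / ‖p‖^2 with htdef
    have ht : 0 < t := div_pos (by linarith) (by positivity)
    have hJtp : J (t • p) = ((t * jp : ℝ) : EReal) := by
      rw [hposhom t ht, hJp, ← EReal.coe_mul]
    have h := hreal (t • p) (t * jp) hJtp
    rw [hv0, hbz] at h
    have hexp : ‖t • p - u‖^2 = t^2 * ‖p‖^2 - 2 * (t * ⟪u, p⟫) + ‖u‖^2 := by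
      rw [norm_sub_sq_real, norm_smul, real_inner_smul_left, Real.norm_eq_abs,
        abs_of_pos ht, real_inner_comm p u]
      ring
    have hz : ‖(0:H) - u‖^2 = ‖u‖^2 := by rw [zero_sub, norm_neg]
    rw [hexp, hz] at h
    have htp : t * ‖p‖^2 = ⟪u, p⟫ - α * jp := by
      rw [htdef, div_mul_cancel₀ _ (by positivity : (‖p‖^2:ℝ) ≠ 0)]
    nlinarith [mul_pos ht (sub_pos.mpr hup)]
  have hnv : (0:ℝ) < ‖v‖ := norm_pos_iff.mpr hvne
  -- subgradient inequality
  have hsg : ∀ w : H, ∀ r : ℝ, J w = (r : EReal) → ⟪u - v, w - v⟫ ≤ α * (r - b) := by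
    intro w r hw
    have key : ∀ t : ℝ, 0 < t → t ≤ 1 →
        0 ≤ (α * (r - b) - ⟪u - v, w - v⟫) + t * (2⁻¹ * ‖w - v‖^2) := by
      intro t ht0 ht1
      have hz := hconv w v t ht0.le ht1
      rw [hw, hJv] at hz
      have hz' : J (t • w + (1 - t) • v) ≤ ((t * r + (1 - t) * b : ℝ) : EReal) := by
        calc J (t • w + (1 - t) • v) ≤ _ := hz
          _ = _ := by rw [← EReal.coe_mul, ← EReal.coe_mul, ← EReal.coe_add]
      set z := t • w + (1 - t) • v with hzdef
      have hzTop : J z ≠ ⊤ := by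
        intro h
        rw [h] at hz'
        exact (EReal.coe_ne_top _) (top_le_iff.mp hz')
      set s := (J z).toReal with hsdef
      have hJz : J z = (s : EReal) := (EReal.coe_toReal hzTop (hJbot z)).symm
      have hs : s ≤ t * r + (1 - t) * b := by
        rw [hJz, EReal.coe_le_coe_iff] at hz'; exact hz'
      have h1 := hreal z s hJz
      have hzu : z - u = t • (w - v) + (v - u) := by
        rw [hzdef]; module
      have hexp : ‖z - u‖^2 = t^2*‖w - v‖^2 + 2*(t*⟪w - v, v - u⟫) + ‖v - u‖^2 := by
        rw [hzu, norm_add_sq_real, norm_smul, real_inner_smul_left, Real.norm_eq_abs,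
          abs_of_pos ht0]
        ring
      rw [hexp] at h1
      have h3 : α * s ≤ α * (t*r + (1-t)*b) := mul_le_mul_of_nonneg_left hs hα.le
      have hinn : ⟪w - v, v - u⟫ = -⟪u - v, w - v⟫ := by
        rw [← neg_sub u v, inner_neg_right, real_inner_comm]
      have h4 : 0 ≤ t * ((α * (r - b) - ⟪u - v, w - v⟫) + t * (2⁻¹ * ‖w - v‖^2)) := by
        nlinarith [h1, h3, hinn]
      exact le_of_mul_le_mul_left (by simpa using h4) ht0
    have := aux_pos_limit key
    linarith
  -- inner identities at v
  have h2v := hsg ((2:ℝ) • v) (2*b) (by rw [hposhom 2 two_pos, hJv, ← EReal.coe_mul])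
  have h0v := hsg 0 0 hJ0
  have hinner_v : ⟪u - v, v⟫ = α * b := by
    have e1 : (2:ℝ) • v - v = v := by module
    rw [e1] at h2v
    rw [zero_sub, inner_neg_right] at h0v
    linarith
  have hiuv : ⟪u, v⟫ = ‖v‖^2 + α * b := by
    have h := hinner_v
    rw [inner_sub_left, real_inner_self_eq_norm_sq] at h
    linarith
  -- case split on J u
  rcases eq_or_ne (J u) ⊤ with hJuTop | hJuTop
  · refine ⟨hvne, ?_, ?_⟩
    · rw [hJuTop, EReal.top_div_of_pos_ne_top (by exact_mod_cast hnu) (EReal.coe_ne_top _)]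
      exact le_top
    · constructor
      · intro h
        rw [hJv, ← EReal.coe_div, hJuTop,
          EReal.top_div_of_pos_ne_top (by exact_mod_cast hnu) (EReal.coe_ne_top _)] at h
        exact absurd h (EReal.coe_ne_top _)
      · intro h
        exfalso
        have h2 := h w₀
        rw [hJuTop, EReal.toReal_top] at h2
        simp only [zero_div, zero_smul, inner_zero_left, EReal.coe_zero, add_zero] at h2
        exact hw₀ (top_le_iff.mp h2)
  -- J u is a positive real a
  set a := (J u).toReal with hadef
  have hJu : J u = (a : EReal) := (EReal.coe_toReal hJuTop (hJbot u)).symm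
  have ha0 : (0:ℝ) < a := by
    have h1 : (0:ℝ) ≤ a := by
      have h := hJnn u; rw [hJu] at h; exact_mod_cast h
    rcases h1.lt_or_eq with h | h
    · exact h
    · exfalso
      have hJu0 : J u = 0 := by rw [hJu, ← h, EReal.coe_zero]
      have := hu u hJu0
      rw [real_inner_self_eq_norm_sq] at this
      nlinarith
  set c := ‖v‖ / ‖u‖ with hcdef
  have hc0 : (0:ℝ) < c := div_pos hnv hnu
  have hcnu : c * ‖u‖ = ‖v‖ := by
    rw [hcdef, div_mul_cancel₀ _ hnu.ne']
  have hJcu : J (c • u) = ((c * a : ℝ) : EReal) := by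
    rw [hposhom c hc0, hJu, ← EReal.coe_mul]
  have hmain := hreal (c • u) (c * a) hJcu
  have hCS : ⟪u, v⟫ ≤ ‖u‖ * ‖v‖ := real_inner_le_norm u v
  have hexp1 : ‖v - u‖^2 = ‖v‖^2 - 2*⟪v, u⟫ + ‖u‖^2 := norm_sub_sq_real v u
  have hexp2 : ‖c • u - u‖^2 = (‖v‖ - ‖u‖)^2 := by
    have e : c • u - u = (c - 1) • u := by module
    rw [e, norm_smul, Real.norm_eq_abs, mul_pow, sq_abs, ← hcnu]
    ring
  have hmain2 : α * b ≤ ⟪u, v⟫ - ‖u‖ * ‖v‖ + α * (c * a) := by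
    rw [hexp1, hexp2] at hmain
    have := real_inner_comm v u
    nlinarith
  have hbca : b ≤ c * a := by
    have : α * b ≤ α * (c * a) := by linarith
    exact le_of_mul_le_mul_left this hα
  have hle : J v / ((‖v‖:ℝ) : EReal) ≤ J u / ((‖u‖:ℝ) : EReal) := by
    rw [hJv, hJu, ← EReal.coe_div, ← EReal.coe_div, EReal.coe_le_coe_iff,
      div_le_div_iff₀ hnv hnu]
    have e : c * a * ‖u‖ = a * ‖v‖ := by rw [mul_comm c a, mul_assoc, hcnu]
    linarith [mul_le_mul_of_nonneg_right hbca hnu.le]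
  refine ⟨hvne, hle, ?_⟩
  constructor
  · -- equality → subdifferential
    intro heq
    rw [hJv, hJu, ← EReal.coe_div, ← EReal.coe_div, EReal.coe_eq_coe_iff] at heq
    have hbc : b * ‖u‖ = a * ‖v‖ := (div_eq_div_iff hnv.ne' hnu.ne').mp heq
    have hnu2 : (0:ℝ) < ‖u‖^2 := by positivity
    have e : c * a * ‖u‖ = a * ‖v‖ := by rw [mul_comm c a, mul_assoc, hcnu]
    -- equality in Cauchy–Schwarz
    have hCSeq : ⟪u, v⟫ = ‖u‖ * ‖v‖ := by
      refine le_antisymm hCS ?_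
      have h1 : α * (b * ‖u‖) ≤ (⟪u, v⟫ - ‖u‖ * ‖v‖) * ‖u‖ + α * (a * ‖v‖) :=
        calc α * (b * ‖u‖) = (α * b) * ‖u‖ := by ring
          _ ≤ (⟪u, v⟫ - ‖u‖ * ‖v‖ + α * (c * a)) * ‖u‖ :=
              mul_le_mul_of_nonneg_right hmain2 hnu.le
          _ = (⟪u, v⟫ - ‖u‖ * ‖v‖) * ‖u‖ + α * (c * a * ‖u‖) := by ring
          _ = (⟪u, v⟫ - ‖u‖ * ‖v‖) * ‖u‖ + α * (a * ‖v‖) := by rw [e]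
      have h2 : (0:ℝ) * ‖u‖ ≤ (⟪u, v⟫ - ‖u‖ * ‖v‖) * ‖u‖ := by
        rw [hbc] at h1; linarith
      have h3 : (0:ℝ) ≤ ⟪u, v⟫ - ‖u‖ * ‖v‖ := le_of_mul_le_mul_right h2 hnu
      linarith
    have h5 : ‖v‖ • u = ‖u‖ • v := inner_eq_norm_mul_iff_real.mp hCSeq
    have hvc : v = c • u := by
      calc v = ‖u‖⁻¹ • (‖u‖ • v) := by
              rw [smul_smul, inv_mul_cancel₀ hnu.ne', one_smul]
        _ = ‖u‖⁻¹ • (‖v‖ • u) := by rw [h5]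
        _ = c • u := by rw [smul_smul, hcdef, div_eq_inv_mul]
    have hbca2 : b = c * a := by
      have h6 : J v = ((c * a : ℝ) : EReal) := by rw [hvc, hJcu]
      rw [hJv, EReal.coe_eq_coe_iff] at h6
      exact h6
    have h8 : ‖c • u‖^2 = c^2 * ‖u‖^2 := by
      rw [norm_smul, Real.norm_eq_abs, mul_pow, sq_abs]
    have h1c : (1 - c) * ‖u‖^2 = α * a := by
      have h7 := hiuv
      rw [hvc, real_inner_smul_right, real_inner_self_eq_norm_sq, h8, hbca2] at h7
      have h9 : c * ((1 - c) * ‖u‖^2) = c * (α * a) := by linear_combination h7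
      exact mul_left_cancel₀ hc0.ne' h9
    have h1cpos : 0 < 1 - c := by
      have hx : 0 < (1 - c) * ‖u‖^2 := by rw [h1c]; positivity
      by_contra hcon
      push_neg at hcon
      nlinarith
    -- prove the subgradient property
    intro w
    rcases eq_or_ne (J w) ⊤ with hw | hw
    · rw [hw]; exact le_top
    have hJw : J w = (((J w).toReal : ℝ) : EReal) := (EReal.coe_toReal hw (hJbot w)).symm
    set r := (J w).toReal with hrdef
    have h9 := hsg w r hJw
    have h10 : u - v = (1 - c) • u := by rw [hvc]; module
    rw [h10, real_inner_smul_left, inner_sub_right, hvc, real_inner_smul_right,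
      real_inner_self_eq_norm_sq, hbca2] at h9
    -- h9 : (1-c) * (⟪u,w⟫ - c*‖u‖²) ≤ α * (r - c*a)
    have e4 : (1 - c) * (c * ‖u‖^2) = c * (α * a) := by
      calc (1 - c) * (c * ‖u‖^2) = c * ((1 - c) * ‖u‖^2) := by ring
        _ = c * (α * a) := by rw [h1c]
    have h11 : (1 - c) * ⟪u, w⟫ ≤ α * r := by linarith [h9, e4]
    have e2 : ((1 - c) * ⟪u, w⟫) * ‖u‖^2 = α * (a * ⟪u, w⟫) :=
      calc ((1 - c) * ⟪u, w⟫) * ‖u‖^2 = ((1 - c) * ‖u‖^2) * ⟪u, w⟫ := by ring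
        _ = (α * a) * ⟪u, w⟫ := by rw [h1c]
        _ = α * (a * ⟪u, w⟫) := by ring
    have h13 : ((1 - c) * ⟪u, w⟫) * ‖u‖^2 ≤ (α * r) * ‖u‖^2 :=
      mul_le_mul_of_nonneg_right h11 hnu2.le
    have e3 : (α * r) * ‖u‖^2 = α * (r * ‖u‖^2) := by ring
    have h14 : α * (a * ⟪u, w⟫) ≤ α * (r * ‖u‖^2) := by linarith [h13, e2, e3]
    have h12 : a * ⟪u, w⟫ ≤ r * ‖u‖^2 := le_of_mul_le_mul_left h14 hα
    rw [hJu, hJw, real_inner_smul_left, ← EReal.coe_add, EReal.coe_le_coe_iff]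
    rw [inner_sub_right, real_inner_self_eq_norm_sq]
    have h15 : a / ‖u‖^2 * (⟪u, w⟫ - ‖u‖^2) = (a * ⟪u, w⟫) / ‖u‖^2 - a := by
      field_simp
    rw [h15]
    have h16 : (a * ⟪u, w⟫) / ‖u‖^2 ≤ r := (div_le_iff₀ hnu2).mpr h12
    linarith
  · -- subdifferential → equality
    intro hsub
    have hnu2 : (0:ℝ) < ‖u‖^2 := by positivity
    have hmin : ∀ w : H, ∀ r : ℝ, J w = (r : EReal) → a / ‖u‖^2 * ⟪u, w⟫ ≤ r := by
      intro w r hw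
      have h := hsub w
      rw [hJu, hw, real_inner_smul_left, ← EReal.coe_add, EReal.coe_le_coe_iff,
        inner_sub_right, real_inner_self_eq_norm_sq] at h
      have hcancel : a / ‖u‖^2 * ‖u‖^2 = a := div_mul_cancel₀ a hnu2.ne'
      have hms := mul_sub (a / ‖u‖^2) ⟪u, w⟫ (‖u‖^2)
      linarith [h, hcancel, hms]
    set β := α * (a / ‖u‖^2) with hβdef
    have hβ0 : 0 < β := mul_pos hα (div_pos ha0 hnu2)
    have hβnu : β * ‖u‖^2 = α * a := by
      rw [hβdef, mul_assoc, div_mul_cancel₀ a hnu2.ne']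
    have hβ1 : β < 1 := by
      have h1 := hmin p jp hJp
      have hip : (0:ℝ) < ⟪u, p⟫ := lt_trans (by positivity) hup
      have h2 : α * (a / ‖u‖^2 * ⟪u, p⟫) ≤ α * jp := mul_le_mul_of_nonneg_left h1 hα.le
      have e : β * ⟪u, p⟫ = α * (a / ‖u‖^2 * ⟪u, p⟫) := by rw [hβdef]; ring
      have h3 : β * ⟪u, p⟫ < 1 * ⟪u, p⟫ := by rw [one_mul]; linarith
      exact lt_of_mul_lt_mul_right h3 hip.le
    have h1β : 0 < 1 - β := by linarith
    have hJv' : J ((1 - β) • u) = (((1 - β) * a : ℝ) : EReal) := by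
      rw [hposhom _ h1β, hJu, ← EReal.coe_mul]
    have hF1 := hreal ((1 - β) • u) ((1 - β) * a) hJv'
    have hexpA : ‖(1 - β) • u - u‖^2 = β^2 * ‖u‖^2 := by
      have e : (1 - β) • u - u = (-β) • u := by module
      rw [e, norm_smul, Real.norm_eq_abs, mul_pow, sq_abs, neg_sq]
    have hexpB : ‖v - (1 - β) • u‖^2
        = ‖v - u‖^2 + 2 * (β * ⟪v - u, u⟫) + β^2 * ‖u‖^2 := by
      have e : v - (1 - β) • u = (v - u) + β • u := by module
      rw [e, norm_add_sq_real, real_inner_smul_right, norm_smul, Real.norm_eq_abs,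
        mul_pow, sq_abs]
    have hF2 : β * ⟪u, v⟫ ≤ α * b := by
      have h1 := hmin v b hJv
      have h2 := mul_le_mul_of_nonneg_left h1 hα.le
      have e : β * ⟪u, v⟫ = α * (a / ‖u‖^2 * ⟪u, v⟫) := by rw [hβdef]; ring
      linarith
    have hvv : v = (1 - β) • u := by
      have e5 : ⟪v - u, u⟫ = ⟪u, v⟫ - ‖u‖^2 := by
        rw [inner_sub_left, real_inner_self_eq_norm_sq, real_inner_comm]
      have e5' : β * ⟪v - u, u⟫ = β * ⟪u, v⟫ - β * ‖u‖^2 := by rw [e5]; ring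
      have e6 : α * ((1 - β) * a) = (1 - β) * (β * ‖u‖^2) := by rw [hβnu]; ring
      rw [hexpA] at hF1
      have hgoal : ‖v - (1 - β) • u‖^2 ≤ 0 := by
        linarith [hF1, hexpB, e5', hF2, e6]
      have h0 : ‖v - (1 - β) • u‖^2 = 0 := le_antisymm hgoal (by positivity)
      have h1 : ‖v - (1 - β) • u‖ = 0 := by
        exact pow_eq_zero_iff (n := 2) (by norm_num) |>.mp h0
      exact sub_eq_zero.mp (norm_eq_zero.mp h1)
    have hnv' : ‖v‖ = (1 - β) * ‖u‖ := by
      rw [hvv, norm_smul, Real.norm_eq_abs, abs_of_pos h1β]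
    have hb' : b = (1 - β) * a := by
      have h : ((b:ℝ) : EReal) = (((1 - β) * a : ℝ) : EReal) := by
        rw [← hJv, hvv, hJv']
      exact_mod_cast h
    rw [hJv, hJu, ← EReal.coe_div, ← EReal.coe_div, EReal.coe_eq_coe_iff, hb', hnv',
      mul_div_mul_left _ _ (ne_of_gt h1β)]


end
end

section
/- Let H be a real Hilbert space and J : H → ℝ ∪ {+∞} be a proper, convex, lower semi-continuous, absolutely one-homogeneous functional satisfying: (i) the Poincaré inequality c_P ‖u‖ ≤ J(u) for all u ∈ N(J)^⊥ with some c_P > 0, and (ii) compactness of the sublevel sets {u : ‖u‖ + J(u) ≤ t} for all t. Let f ∈ N(J)^⊥ with ‖f‖ = 1 and 0 < J(f) < ∞, fix c ∈ (0,1), and let (u^k) be generated by the proximal power method u⁰ = f, v^k = prox_{α(u^k)}^J(u^k), u^{k+1} = v^k/‖v^k‖, where α is either the constant parameter rule α(u) = c/J(u⁰) or the variable parameter rule α(u) = c/J(u). Then a subsequence of (u^k) converges in norm to some u* ∈ H with ‖u*‖ = 1 (in particular u* ≠ 0) which is an eigenvector of the proximal operator: there exists λ with 0 < λ < 1 such that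 λ u* = prox_{α(u*)}^J(u*). -/
open scoped RealInnerProductSpace
open Filter Topology

noncomputable section

variable {H : Type*} [NormedAddCommGroup H] [InnerProductSpace ℝ H] [CompleteSpace H]

set_option linter.unusedSectionVars false
set_option linter.unusedVariables false
set_option maxHeartbeats 1000000

private lemma JJ_nonneg {J : H → EReal} (hbot : ∀ u : H, J u ≠ ⊥) (hconv : ConvexFn J)
    (hhom : AbsOneHom J) (u : H) : (0 : EReal) ≤ J u := by
  by_cases htop : J u = ⊤
  · rw [htop]; exact le_top
  · have hu : J u = ((J u).toReal : ℝ) := (EReal.coe_toReal htop (hbot u)).symm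
    set r := (J u).toReal with hr
    have hneg : J (-u) = J u := by
      have h := hhom.2 (-1) (by norm_num) u
      simpa using h
    have h := hconv u (-u) (1/2) (by norm_num) (by norm_num)
    have heq : (1/2 : ℝ) • u + ((1 : ℝ) - 1/2) • (-u) = 0 := by
      rw [smul_neg, show (1:ℝ) - 1/2 = 1/2 by norm_num, add_neg_cancel]
    rw [heq, hhom.1, hneg, hu, ← EReal.coe_mul, ← EReal.coe_mul, ← EReal.coe_add] at h
    have hr0 : (0 : ℝ) ≤ 1/2 * r + (1 - 1/2) * r := by exact_mod_cast h
    rw [hu]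
    exact_mod_cast (by linarith : (0:ℝ) ≤ r)

private lemma J_smul_coe {J : H → EReal} (hhom : AbsOneHom J) {t r : ℝ} (ht : 0 ≤ t) {u : H}
    (hu : J u = ((r : ℝ) : EReal)) : J (t • u) = (((t * r : ℝ)) : EReal) := by
  rcases eq_or_lt_of_le ht with rfl | h
  · simp [hhom.1]
  · rw [hhom.2 t h.ne' u, hu, abs_of_pos h, ← EReal.coe_mul]

private lemma J_add_null {J : H → EReal} (hbot : ∀ u : H, J u ≠ ⊥) (hconv : ConvexFn J)
    (hhom : AbsOneHom J) {n : H} (hn : J n = 0) (v : H) : J (v + n) = J v := by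
  have key : ∀ (w m : H), J m = 0 → J (w + m) ≤ J w := by
    intro w m hm
    have h := hconv ((2:ℝ) • w) ((2:ℝ) • m) (1/2) (by norm_num) (by norm_num)
    have e1 : (1/2 : ℝ) • ((2:ℝ) • w) + ((1:ℝ) - 1/2) • ((2:ℝ) • m) = w + m := by
      rw [smul_smul, smul_smul]; norm_num
    have h2m : J ((2:ℝ) • m) = 0 := by
      rw [hhom.2 2 (by norm_num) m, hm, mul_zero]
    rw [e1, h2m, mul_zero, add_zero] at h
    by_cases htop : J w = ⊤
    · rw [htop]; exact le_top
    · have hw : J w = ((J w).toReal : ℝ) := (EReal.coe_toReal htop (hbot w)).symm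
      set r := (J w).toReal
      have h2w : J ((2:ℝ) • w) = ((2 * r : ℝ) : EReal) := by
        rw [hhom.2 2 (by norm_num) w, hw, ← EReal.coe_mul]
        norm_num
      rw [h2w, ← EReal.coe_mul] at h
      rw [hw]
      calc J (w + m) ≤ (((1/2 * (2*r) : ℝ)) : EReal) := h
        _ = ((r : ℝ) : EReal) := EReal.coe_eq_coe_iff.mpr (by ring)
  refine le_antisymm (key v n hn) ?_
  have hnn : J (-n) = 0 := by
    have h := hhom.2 (-1) (by norm_num) n
    simpa [hn] using h
  have h := key (v + n) (-n) hnn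
  rwa [add_neg_cancel_right] at h

private lemma prox_finite {J : H → EReal} {a : ℝ} {u v : H} (ha : 0 < a)
    (hbot : ∀ w : H, J w ≠ ⊥) (h : IsProxPt J a u v) {r : ℝ} (hu : J u = ((r : ℝ) : EReal)) :
    J v ≠ ⊤ := by
  intro htop
  have h1 := h u
  rw [ProxObj, ProxObj, htop, hu, EReal.coe_mul_top_of_pos ha,
    EReal.add_top_of_ne_bot (EReal.coe_ne_bot _), ← EReal.coe_mul, ← EReal.coe_add] at h1
  exact (EReal.coe_lt_top _).not_ge h1

private lemma prox_real {J : H → EReal} {a : ℝ} {u v w : H} (h : IsProxPt J a u v)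
    {jv jw : ℝ} (hjv : J v = ((jv : ℝ) : EReal)) (hjw : J w = ((jw : ℝ) : EReal)) :
    (2:ℝ)⁻¹ * ‖v - u‖ ^ 2 + a * jv ≤ (2:ℝ)⁻¹ * ‖w - u‖ ^ 2 + a * jw := by
  have h1 := h w
  rw [ProxObj, ProxObj, hjv, hjw, ← EReal.coe_mul, ← EReal.coe_mul, ← EReal.coe_add,
    ← EReal.coe_add] at h1
  exact_mod_cast h1

private lemma quad_opt {B Q : ℝ} (hB : 0 < B)
    (h : ∀ s : ℝ, 0 ≤ s → (2:ℝ)⁻¹ * B - Q ≤ (2:ℝ)⁻¹ * s ^ 2 * B - s * Q) : Q = B := by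
  have h0 := h 0 le_rfl
  have hQ : 0 ≤ Q := by nlinarith
  have h1 := h (Q / B) (div_nonneg hQ hB.le)
  have e1 : (2:ℝ)⁻¹ * (Q / B) ^ 2 * B = (2:ℝ)⁻¹ * (Q ^ 2 / B) := by field_simp
  have e2 : (Q / B) * Q = Q ^ 2 / B := by ring
  rw [e1, e2] at h1
  have h3 : B * ((2:ℝ)⁻¹ * B - Q) ≤ B * ((2:ℝ)⁻¹ * (Q ^ 2 / B) - Q ^ 2 / B) :=
    mul_le_mul_of_nonneg_left h1 hB.le
  have e3 : B * ((2:ℝ)⁻¹ * (Q ^ 2 / B) - Q ^ 2 / B) = -((2:ℝ)⁻¹ * Q ^ 2) := by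
    field_simp; ring
  rw [e3] at h3
  nlinarith [sq_nonneg (B - Q)]

/-- **Convergence of the proximal power method.**
Let `J` be proper, convex, lsc, absolutely one-homogeneous, satisfying the
Poincaré inequality `c_P‖u‖ ≤ J(u)` on `N(J)^⊥` and having compact sublevel
sets of `‖·‖ + J(·)`. Let `(u^k)` be generated by the proximal power method
starting from `f ∈ N(J)^⊥` with `‖f‖ = 1`, `0 < J f < ∞`, with the constant
parameter rule `α(u) = c/J(u⁰)` or the variable parameter rule `α(u) = c/J(u)`
for a fixed `c ∈ (0,1)`. Then a subsequence of `(u^k)` converges in norm to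
some `u*` with `‖u*‖ = 1` which is an eigenvector of the proximal operator:
`λ • u* = prox_{α(u*)}^J(u*)` for some `0 < λ < 1`. -/
theorem convergence_of_proximal_power_method
    (J : H → EReal) (hproper : ProperFn J) (hconv : ConvexFn J)
    (hlsc : LowerSemicontinuous J) (hhom : AbsOneHom J)
    (cP : ℝ) (hcP : 0 < cP)
    (hpoincare : ∀ u : H, InNullPerp J u → ((cP * ‖u‖ : ℝ) : EReal) ≤ J u)
    (hcompact : ∀ t : ℝ, IsCompact {u : H | ((‖u‖ : ℝ) : EReal) + J u ≤ (t : EReal)})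
    (f : H) (hf : InNullPerp J f) (hfnorm : ‖f‖ = 1)
    (hJfpos : 0 < J f) (hJffin : J f ≠ ⊤)
    (c : ℝ) (hc0 : 0 < c) (hc1 : c < 1)
    (α : H → ℝ)
    (hrule : (∀ u : H, (α u : EReal) = (c : EReal) / J f) ∨
             (∀ u : H, (α u : EReal) = (c : EReal) / J u))
    (useq vseq : ℕ → H)
    (hinit : useq 0 = f)
    (hv : ∀ k, IsProxPt J (α (useq k)) (useq k) (vseq k))
    (hstep : ∀ k, useq (k + 1) = ‖vseq k‖⁻¹ • vseq k) :
    ∃ φ : ℕ → ℕ, StrictMono φ ∧ ∃ ustar : H,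
      Filter.Tendsto (useq ∘ φ) Filter.atTop (nhds ustar) ∧ ‖ustar‖ = 1 ∧
      ∃ lam : ℝ, 0 < lam ∧ lam < 1 ∧ IsProxPt J (α ustar) ustar (lam • ustar) := by
  obtain ⟨hJbot, -⟩ := hproper
  have hJ0 : ∀ u : H, (0 : EReal) ≤ J u := JJ_nonneg hJbot hconv hhom
  set μ : ℕ → ℝ := fun k => (J (useq k)).toReal with hμdef
  set A : ℕ → ℝ := fun k => α (useq k) with hAdef
  have hJf_coe : J f = ((μ 0 : ℝ) : EReal) := by
    have : μ 0 = (J f).toReal := by rw [hμdef]; simp only [hinit]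
    rw [this]
    exact (EReal.coe_toReal hJffin (hJbot f)).symm
  have hcPμ0 : cP ≤ μ 0 := by
    have h := hpoincare f hf
    rw [hfnorm, mul_one, hJf_coe] at h
    exact_mod_cast h
  have hμ0pos : 0 < μ 0 := hcP.trans_le hcPμ0
  -- values of the parameter rule
  have hAfact : ∀ k, J (useq k) = ((μ k : ℝ) : EReal) → cP ≤ μ k → μ k ≤ μ 0 →
      0 < A k ∧ A k * μ k ≤ c := by
    intro k hk hcpk hk0
    have hμkpos : 0 < μ k := hcP.trans_le hcpk
    rcases hrule with hr | hr
    · have h := hr (useq k)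
      rw [hJf_coe, ← EReal.coe_div] at h
      have hA : A k = c / μ 0 := by exact_mod_cast h
      refine ⟨by rw [hA]; positivity, ?_⟩
      rw [hA, div_mul_eq_mul_div, div_le_iff₀ hμ0pos]
      nlinarith
    · have h := hr (useq k)
      rw [hk, ← EReal.coe_div] at h
      have hA : A k = c / μ k := by exact_mod_cast h
      refine ⟨by rw [hA]; positivity, ?_⟩
      rw [hA, div_mul_cancel₀ _ hμkpos.ne']
  -- the main induction step
  have step : ∀ k, (‖useq k‖ = 1 ∧ InNullPerp J (useq k) ∧ J (useq k) = ((μ k : ℝ) : EReal) ∧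
        cP ≤ μ k ∧ μ k ≤ μ 0) →
      ((‖useq (k+1)‖ = 1 ∧ InNullPerp J (useq (k+1)) ∧
          J (useq (k+1)) = ((μ (k+1) : ℝ) : EReal) ∧ cP ≤ μ (k+1) ∧ μ (k+1) ≤ μ 0) ∧
        μ (k+1) ≤ μ k ∧
        1 - A k * μ k ≤ ‖vseq k‖ ∧
        ‖vseq k‖ + A k * μ (k+1) ≤ 1 ∧
        0 < ‖vseq k‖ ∧
        ⟪useq (k+1), useq k⟫ = ‖vseq k‖ + A k * μ (k+1) ∧
        J (vseq k) = ((μ (k+1) * ‖vseq k‖ : ℝ) : EReal) ∧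
        (∀ (w : H) (jw : ℝ), J w = ((jw : ℝ) : EReal) →
          (2:ℝ)⁻¹ * (1 - ‖vseq k‖ ^ 2) ≤ (2:ℝ)⁻¹ * ‖w - useq k‖ ^ 2 + A k * jw)) := by
    intro k hInv
    obtain ⟨hun, huperp, hum, hcpm, hm0⟩ := hInv
    obtain ⟨hapos, hamc⟩ := hAfact k hum hcpm hm0
    have hmpos : 0 < μ k := hcP.trans_le hcpm
    have hvtop : J (vseq k) ≠ ⊤ := prox_finite hapos hJbot (hv k) hum
    set jv := (J (vseq k)).toReal with hjvdef
    have hjv : J (vseq k) = ((jv : ℝ) : EReal) := (EReal.coe_toReal hvtop (hJbot _)).symm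
    have hjv0 : 0 ≤ jv := by
      have h := hJ0 (vseq k)
      rw [hjv] at h
      exact_mod_cast h
    have hR : ∀ (w : H) (jw : ℝ), J w = ((jw : ℝ) : EReal) →
        (2:ℝ)⁻¹ * ‖vseq k - useq k‖ ^ 2 + A k * jv ≤ (2:ℝ)⁻¹ * ‖w - useq k‖ ^ 2 + A k * jw :=
      fun w jw hw => prox_real (hv k) hjv hw
    have hjvm : jv ≤ μ k := by
      have h := hR (useq k) (μ k) hum
      rw [sub_self, norm_zero] at h
      have h2 : A k * jv ≤ A k * μ k := by nlinarith [sq_nonneg ‖vseq k - useq k‖]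
      exact (mul_le_mul_iff_right₀ hapos).mp h2
    -- v ≠ 0
    have hvne : vseq k ≠ 0 := by
      intro h0
      have hjv0' : jv = 0 := by
        rw [hjvdef, h0, hhom.1]; rfl
      have hw : J ((1-c) • useq k) = (((1-c) * μ k : ℝ) : EReal) :=
        J_smul_coe hhom (by linarith) hum
      have h := hR ((1-c) • useq k) ((1-c) * μ k) hw
      rw [h0, hjv0'] at h
      have e0 : ‖(0:H) - useq k‖ = 1 := by rw [zero_sub, norm_neg, hun]
      have e1 : ‖(1-c) • useq k - useq k‖ = c := by
        have e : (1-c) • useq k - useq k = (-c) • useq k := by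
          have h' := sub_smul (1-c) 1 (useq k)
          rw [one_smul] at h'
          rw [← h']
          congr 1
          ring
        rw [e, norm_smul, hun, mul_one, Real.norm_eq_abs, abs_neg, abs_of_pos hc0]
      rw [e0, e1] at h
      have hprod : (1-c) * (A k * μ k) ≤ (1-c) * c :=
        mul_le_mul_of_nonneg_left hamc (by linarith)
      nlinarith [h, hprod]
    have hvpos : 0 < ‖vseq k‖ := norm_pos_iff.mpr hvne
    have hB : (0:ℝ) < ‖vseq k‖ ^ 2 := by positivity
    -- expansion of norms along the ray through v
    have hexp : ∀ s : ℝ, ‖s • vseq k - useq k‖ ^ 2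
        = s ^ 2 * ‖vseq k‖ ^ 2 - 2 * (s * ⟪useq k, vseq k⟫) + 1 := by
      intro s
      rw [norm_sub_sq_real, norm_smul, real_inner_smul_left, real_inner_comm, hun,
        mul_pow, Real.norm_eq_abs, sq_abs]
      ring
    have hexp1 : ‖vseq k - useq k‖ ^ 2
        = ‖vseq k‖ ^ 2 - 2 * ⟪useq k, vseq k⟫ + 1 := by
      have h := hexp 1
      rw [one_smul] at h
      rw [h]; ring
    -- the inner-product identity
    have hqd : ∀ s : ℝ, 0 ≤ s →
        (2:ℝ)⁻¹ * ‖vseq k‖ ^ 2 - (⟪useq k, vseq k⟫ - A k * jv)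
          ≤ (2:ℝ)⁻¹ * s ^ 2 * ‖vseq k‖ ^ 2 - s * (⟪useq k, vseq k⟫ - A k * jv) := by
      intro s hs
      have h := hR (s • vseq k) (s * jv) (J_smul_coe hhom hs hjv)
      rw [hexp1, hexp s] at h
      nlinarith [h]
    have hq' : ⟪useq k, vseq k⟫ = ‖vseq k‖ ^ 2 + A k * jv := by
      have := quad_opt hB hqd
      linarith
    -- lower bound on ‖v‖
    have hlow : 1 - A k * μ k ≤ ‖vseq k‖ := by
      have hw : J ((1 - A k * μ k) • useq k) = (((1 - A k * μ k) * μ k : ℝ) : EReal) :=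
        J_smul_coe hhom (by linarith) hum
      have h := hR ((1 - A k * μ k) • useq k) ((1 - A k * μ k) * μ k) hw
      have e : ‖(1 - A k * μ k) • useq k - useq k‖ ^ 2 = (A k * μ k) ^ 2 := by
        have e' : (1 - A k * μ k) • useq k - useq k = (-(A k * μ k)) • useq k := by
          have h' := sub_smul (1 - A k * μ k) 1 (useq k)
          rw [one_smul] at h'
          rw [← h']
          congr 1
          ring
        rw [e', norm_smul, hun, mul_one, Real.norm_eq_abs, abs_neg, sq_abs]
      rw [hexp1, e] at h
      have hsq : (1 - A k * μ k) ^ 2 ≤ ‖vseq k‖ ^ 2 := by nlinarith [h, hq']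
      nlinarith [hsq, norm_nonneg (vseq k)]
    -- Cauchy-Schwarz upper bound
    have hCS : ⟪useq k, vseq k⟫ ≤ ‖vseq k‖ := by
      have h := real_inner_le_norm (useq k) (vseq k)
      rwa [hun, one_mul] at h
    have hup' : ‖vseq k‖ ^ 2 + A k * jv ≤ ‖vseq k‖ := by rw [← hq']; exact hCS
    -- the next iterate
    have hu1 : useq (k+1) = ‖vseq k‖⁻¹ • vseq k := hstep k
    have hu1norm : ‖useq (k+1)‖ = 1 := by
      rw [hu1, norm_smul, norm_inv, norm_norm, inv_mul_cancel₀ hvpos.ne']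
    have hJu1 : J (useq (k+1)) = ((‖vseq k‖⁻¹ * jv : ℝ) : EReal) := by
      rw [hu1]; exact J_smul_coe hhom (by positivity) hjv
    have hμ1 : μ (k+1) = ‖vseq k‖⁻¹ * jv := by
      rw [show μ (k+1) = (J (useq (k+1))).toReal from rfl, hJu1, EReal.toReal_coe]
    have hjveq : jv = μ (k+1) * ‖vseq k‖ := by
      rw [hμ1]; field_simp
    have hum1 : J (useq (k+1)) = ((μ (k+1) : ℝ) : EReal) :=
      (EReal.coe_toReal (by rw [hJu1]; exact EReal.coe_ne_top _) (hJbot _)).symm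
    -- orthogonality to the null space is preserved
    have hperp1 : InNullPerp J (useq (k+1)) := by
      intro n hn
      have hd : ⟪vseq k - useq k, n⟫ = 0 := by
        by_cases hn0 : n = 0
        · rw [hn0, inner_zero_right]
        · have hnpos : (0:ℝ) < ‖n‖ ^ 2 := by
            have := norm_pos_iff.mpr hn0
            positivity
          have hkey : ∀ t : ℝ, 0 ≤ 2 * (t * ⟪vseq k - useq k, n⟫) + t ^ 2 * ‖n‖ ^ 2 := by
            intro t
            have htn : J (t • n) = 0 := by
              rcases eq_or_ne t 0 with rfl | ht
              · rw [zero_smul]; exact hhom.1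
              · rw [hhom.2 t ht n, hn, mul_zero]
            have hw : J (vseq k + t • n) = ((jv : ℝ) : EReal) := by
              rw [J_add_null hJbot hconv hhom htn (vseq k), hjv]
            have h := hR (vseq k + t • n) jv hw
            have e : ‖vseq k + t • n - useq k‖ ^ 2
                = ‖vseq k - useq k‖ ^ 2 + 2 * (t * ⟪vseq k - useq k, n⟫) + t ^ 2 * ‖n‖ ^ 2 := by
              have e' : vseq k + t • n - useq k = (vseq k - useq k) + t • n := by abel
              rw [e', norm_add_sq_real, real_inner_smul_right, norm_smul, mul_pow,
                Real.norm_eq_abs, sq_abs]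
            rw [e] at h
            linarith
          have h5 := hkey (-(⟪vseq k - useq k, n⟫ / ‖n‖ ^ 2))
          have e5 : 2 * ((-(⟪vseq k - useq k, n⟫ / ‖n‖ ^ 2)) * ⟪vseq k - useq k, n⟫)
              + (-(⟪vseq k - useq k, n⟫ / ‖n‖ ^ 2)) ^ 2 * ‖n‖ ^ 2
              = -(⟪vseq k - useq k, n⟫ ^ 2 / ‖n‖ ^ 2) := by
            field_simp
            ring
          rw [e5] at h5
          have h6 : ⟪vseq k - useq k, n⟫ ^ 2 / ‖n‖ ^ 2 ≤ 0 := by linarith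
          have h7 : ⟪vseq k - useq k, n⟫ ^ 2 ≤ 0 := by
            have e6 : ‖n‖ ^ 2 * (⟪vseq k - useq k, n⟫ ^ 2 / ‖n‖ ^ 2)
                = ⟪vseq k - useq k, n⟫ ^ 2 := by field_simp
            have h9 := mul_le_mul_of_nonneg_left h6 hnpos.le
            rw [mul_zero, e6] at h9
            exact h9
          have h8 : ⟪vseq k - useq k, n⟫ ^ 2 = 0 :=
            le_antisymm h7 (sq_nonneg _)
          exact (pow_eq_zero_iff two_ne_zero).mp h8
      have hvn : ⟪vseq k, n⟫ = 0 := by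
        have e : ⟪vseq k - useq k, n⟫ = ⟪vseq k, n⟫ - ⟪useq k, n⟫ := inner_sub_left _ _ _
        have hu_n := huperp n hn
        rw [e, hu_n, sub_zero] at hd
        exact hd
      rw [hu1, real_inner_smul_left, hvn, mul_zero]
    -- Poincaré bound for the next iterate
    have hcp1 : cP ≤ μ (k+1) := by
      have h := hpoincare (useq (k+1)) hperp1
      rw [hu1norm, mul_one, hum1] at h
      exact_mod_cast h
    -- upper bound on ‖v‖ in terms of μ (k+1)
    have hvup : ‖vseq k‖ + A k * μ (k+1) ≤ 1 := by
      have e : ‖vseq k‖ * (‖vseq k‖ + A k * μ (k+1)) = ‖vseq k‖ ^ 2 + A k * jv := by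
        rw [hjveq]; ring
      have h : ‖vseq k‖ * (‖vseq k‖ + A k * μ (k+1)) ≤ ‖vseq k‖ * 1 := by
        rw [e, mul_one]; exact hup'
      exact (mul_le_mul_iff_right₀ hvpos).mp h
    -- monotonicity of μ
    have hmono : μ (k+1) ≤ μ k := by
      have h1 : A k * μ (k+1) ≤ A k * μ k := by linarith
      exact (mul_le_mul_iff_right₀ hapos).mp h1
    -- inner product with next iterate
    have hinner1 : ⟪useq (k+1), useq k⟫ = ‖vseq k‖ + A k * μ (k+1) := by
      rw [hu1, real_inner_smul_left, real_inner_comm, hq', hjveq]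
      field_simp
    -- J of v
    have hJv : J (vseq k) = ((μ (k+1) * ‖vseq k‖ : ℝ) : EReal) := by
      rw [hjv, hjveq]
    -- the objective inequality
    have hobj : ∀ (w : H) (jw : ℝ), J w = ((jw : ℝ) : EReal) →
        (2:ℝ)⁻¹ * (1 - ‖vseq k‖ ^ 2) ≤ (2:ℝ)⁻¹ * ‖w - useq k‖ ^ 2 + A k * jw := by
      intro w jw hw
      have h := hR w jw hw
      rw [hexp1] at h
      nlinarith [h, hq']
    exact ⟨⟨hu1norm, hperp1, hum1, hcp1, hmono.trans hm0⟩, hmono, hlow, hvup, hvpos,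
      hinner1, hJv, hobj⟩
  -- the invariant holds for all k
  have main : ∀ k, ‖useq k‖ = 1 ∧ InNullPerp J (useq k) ∧ J (useq k) = ((μ k : ℝ) : EReal) ∧
      cP ≤ μ k ∧ μ k ≤ μ 0 := by
    intro k
    induction k with
    | zero =>
      refine ⟨by rw [hinit]; exact hfnorm, by rw [hinit]; exact hf, ?_, hcPμ0, le_rfl⟩
      rw [hinit]; exact hJf_coe
    | succ n ih => exact (step n ih).1
  have facts := fun k => (step k (main k)).2
  -- convergence of μ
  have hμanti : Antitone μ := antitone_nat_of_succ_le (fun k => (facts k).1)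
  have hbdd : BddBelow (Set.range μ) := by
    refine ⟨cP, ?_⟩
    rintro x ⟨k, rfl⟩
    exact (main k).2.2.2.1
  set μs := ⨅ k, μ k with hμsdef
  have hμtend : Tendsto μ atTop (𝓝 μs) := tendsto_atTop_ciInf hμanti hbdd
  have hμs_cP : cP ≤ μs := le_ciInf (fun k => (main k).2.2.2.1)
  have hμspos : 0 < μs := hcP.trans_le hμs_cP
  have hμs_le : ∀ k, μs ≤ μ k := fun k => ciInf_le hbdd k
  have hμ1tend : Tendsto (fun k => μ (k+1)) atTop (𝓝 μs) := by
    have h := hμtend.comp (tendsto_add_atTop_nat 1)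
    exact h
  -- the limiting parameter value
  obtain ⟨αs, hαtend, hαpos, hαμc, hαμpos, hαu⟩ :
      ∃ αs : ℝ, Tendsto A atTop (𝓝 αs) ∧ 0 < αs ∧ αs * μs ≤ c ∧ 0 < αs * μs ∧
        (∀ u : H, J u = ((μs : ℝ) : EReal) → α u = αs) := by
    rcases hrule with hr | hr
    · have hAk : ∀ k, A k = c / μ 0 := by
        intro k
        have h := hr (useq k)
        rw [hJf_coe, ← EReal.coe_div] at h
        exact_mod_cast h
      refine ⟨c / μ 0, tendsto_const_nhds.congr (fun k => (hAk k).symm),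
        div_pos hc0 hμ0pos, ?_, mul_pos (div_pos hc0 hμ0pos) hμspos, ?_⟩
      · rw [div_mul_eq_mul_div, div_le_iff₀ hμ0pos]
        nlinarith [hμs_le 0]
      · intro u hu
        have h := hr u
        rw [hJf_coe, ← EReal.coe_div] at h
        exact_mod_cast h
    · have hAk : ∀ k, A k = c / μ k := by
        intro k
        have h := hr (useq k)
        rw [(main k).2.2.1, ← EReal.coe_div] at h
        exact_mod_cast h
      refine ⟨c / μs, ?_, div_pos hc0 hμspos, ?_, ?_, ?_⟩
      · exact (tendsto_const_nhds.div hμtend hμspos.ne').congr (fun k => (hAk k).symm)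
      · rw [div_mul_cancel₀ _ hμspos.ne']
      · rw [div_mul_cancel₀ _ hμspos.ne']
        exact hc0
      · intro u hu
        have h := hr u
        rw [hu, ← EReal.coe_div] at h
        exact_mod_cast h
  have hAμ : Tendsto (fun k => A k * μ k) atTop (𝓝 (αs * μs)) := hαtend.mul hμtend
  have hAμ1 : Tendsto (fun k => A k * μ (k+1)) atTop (𝓝 (αs * μs)) := hαtend.mul hμ1tend
  set lam := 1 - αs * μs with hlamdef
  have hlam0 : 0 < lam := by rw [hlamdef]; linarith
  have hlam1 : lam < 1 := by rw [hlamdef]; linarith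
  -- convergence of ‖v k‖ to lam
  have hvnorm_tend : Tendsto (fun k => ‖vseq k‖) atTop (𝓝 lam) := by
    have hl : Tendsto (fun k => 1 - A k * μ k) atTop (𝓝 lam) := tendsto_const_nhds.sub hAμ
    have hh : Tendsto (fun k => 1 - A k * μ (k+1)) atTop (𝓝 lam) := tendsto_const_nhds.sub hAμ1
    exact tendsto_of_tendsto_of_tendsto_of_le_of_le hl hh
      (fun k => (facts k).2.1) (fun k => by linarith [(facts k).2.2.1])
  -- successive distances tend to zero
  have hdist2 : ∀ k, ‖useq (k+1) - useq k‖ ^ 2 = 2 - 2 * (‖vseq k‖ + A k * μ (k+1)) := by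
    intro k
    rw [norm_sub_sq_real, (facts k).2.2.2.2.1, (main (k+1)).1, (main k).1]
    ring
  have hdist : Tendsto (fun k => ‖useq (k+1) - useq k‖) atTop (𝓝 0) := by
    have h2 : Tendsto (fun k => 2 - 2 * (‖vseq k‖ + A k * μ (k+1))) atTop (𝓝 0) := by
      have h : Tendsto (fun k => 2 - 2 * (‖vseq k‖ + A k * μ (k+1))) atTop
          (𝓝 (2 - 2 * (lam + αs * μs))) :=
        tendsto_const_nhds.sub ((hvnorm_tend.add hAμ1).const_mul 2)
      have h0 : (0:ℝ) = 2 - 2 * (lam + αs * μs) := by rw [hlamdef]; ring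
      rw [h0]
      exact h
    have h3 : ∀ k, ‖useq (k+1) - useq k‖
        = Real.sqrt (2 - 2 * (‖vseq k‖ + A k * μ (k+1))) := by
      intro k
      rw [← hdist2 k, Real.sqrt_sq (norm_nonneg _)]
    have h4 := h2.sqrt
    rw [Real.sqrt_zero] at h4
    exact h4.congr (fun k => (h3 k).symm)
  -- compactness: extract a convergent subsequence
  have hmem : ∀ k, useq k ∈ {u : H | ((‖u‖ : ℝ) : EReal) + J u ≤ ((1 + μ 0 : ℝ) : EReal)} := by
    intro k
    rw [Set.mem_setOf_eq, (main k).1, (main k).2.2.1, ← EReal.coe_add]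
    exact_mod_cast (by linarith [(main k).2.2.2.2] : (1:ℝ) + μ k ≤ 1 + μ 0)
  obtain ⟨ustar, -, φ, hφ, hφtend⟩ := (hcompact (1 + μ 0)).tendsto_subseq hmem
  have hφat : Tendsto φ atTop atTop := hφ.tendsto_atTop
  have hustar_norm : ‖ustar‖ = 1 := by
    have h1 : Tendsto (fun k => ‖useq (φ k)‖) atTop (𝓝 ‖ustar‖) := hφtend.norm
    have h2 : (fun k => ‖useq (φ k)‖) = fun _ => (1:ℝ) := funext fun k => (main (φ k)).1
    rw [h2] at h1
    exact tendsto_nhds_unique h1 tendsto_const_nhds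
  have hu1tend : Tendsto (fun k => useq (φ k + 1)) atTop (𝓝 ustar) := by
    have hδ : Tendsto (fun k => useq (φ k + 1) - useq (φ k)) atTop (𝓝 0) := by
      apply tendsto_zero_iff_norm_tendsto_zero.mpr
      exact hdist.comp hφat
    have h := hδ.add hφtend
    rw [zero_add] at h
    exact h.congr (fun k => by simp)
  have hvφn : Tendsto (fun k => ‖vseq (φ k)‖) atTop (𝓝 lam) := hvnorm_tend.comp hφat
  have hvφtend : Tendsto (fun k => vseq (φ k)) atTop (𝓝 (lam • ustar)) := by
    have hv_eq : ∀ n, vseq n = ‖vseq n‖ • useq (n+1) := by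
      intro n
      rw [hstep n, smul_smul, mul_inv_cancel₀ (facts n).2.2.2.1.ne', one_smul]
    exact (hvφn.smul hu1tend).congr (fun k => (hv_eq (φ k)).symm)
  have hμφ1tend : Tendsto (fun k => μ (φ k + 1)) atTop (𝓝 μs) := hμ1tend.comp hφat
  have hAφtend : Tendsto (fun k => A (φ k)) atTop (𝓝 αs) := hαtend.comp hφat
  -- lower semicontinuity bound at the limit
  have hJlam : J (lam • ustar) ≤ ((lam * μs : ℝ) : EReal) := by
    by_contra hcon
    push_neg at hcon
    obtain ⟨r, hr1, hr2⟩ := EReal.exists_between_coe_real hcon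
    have hev1 : ∀ᶠ k in atTop, ((r:ℝ) : EReal) < J (vseq (φ k)) :=
      hvφtend.eventually (hlsc (lam • ustar) r hr2)
    have htnd : Tendsto (fun k => μ (φ k + 1) * ‖vseq (φ k)‖) atTop (𝓝 (μs * lam)) :=
      hμφ1tend.mul hvφn
    have hr1' : μs * lam < r := by
      have : ((lam * μs : ℝ) : EReal) < ((r:ℝ) : EReal) := hr1
      have h := EReal.coe_lt_coe_iff.mp this
      linarith
    have hev2 : ∀ᶠ k in atTop, μ (φ k + 1) * ‖vseq (φ k)‖ < r :=
      htnd.eventually_lt_const hr1'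
    obtain ⟨k, hk1, hk2⟩ := (hev1.and hev2).exists
    rw [(facts (φ k)).2.2.2.2.2.1] at hk1
    have hk1' : r < μ (φ k + 1) * ‖vseq (φ k)‖ := EReal.coe_lt_coe_iff.mp hk1
    linarith
  -- the key prox property at parameter αs
  have hnrm : ∀ t : ℝ, ‖t • ustar - ustar‖ ^ 2 = (1 - t) ^ 2 := by
    intro t
    have e : t • ustar - ustar = (t - 1) • ustar := by
      have h' := sub_smul t 1 ustar
      rw [one_smul] at h'
      rw [← h']
    rw [e, norm_smul, hustar_norm, mul_one, Real.norm_eq_abs, sq_abs]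
    ring
  have hKey : IsProxPt J αs ustar (lam • ustar) := by
    intro w
    by_cases hwtop : J w = ⊤
    · rw [ProxObj, ProxObj, hwtop, EReal.coe_mul_top_of_pos hαpos,
        EReal.add_top_of_ne_bot (EReal.coe_ne_bot _)]
      exact le_top
    · set jw := (J w).toReal with hjwdef
      have hjw : J w = ((jw : ℝ) : EReal) := (EReal.coe_toReal hwtop (hJbot w)).symm
      have hlim : (2:ℝ)⁻¹ * (1 - lam ^ 2) ≤ (2:ℝ)⁻¹ * ‖w - ustar‖ ^ 2 + αs * jw := by
        have L1 : Tendsto (fun k => (2:ℝ)⁻¹ * (1 - ‖vseq (φ k)‖ ^ 2)) atTop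
            (𝓝 ((2:ℝ)⁻¹ * (1 - lam ^ 2))) :=
          (tendsto_const_nhds.sub (hvφn.pow 2)).const_mul _
        have L2 : Tendsto (fun k => (2:ℝ)⁻¹ * ‖w - useq (φ k)‖ ^ 2 + A (φ k) * jw) atTop
            (𝓝 ((2:ℝ)⁻¹ * ‖w - ustar‖ ^ 2 + αs * jw)) := by
          have ha : Tendsto (fun k => w - useq (φ k)) atTop (𝓝 (w - ustar)) :=
            tendsto_const_nhds.sub hφtend
          exact ((ha.norm.pow 2).const_mul _).add (hAφtend.mul_const jw)
        exact le_of_tendsto_of_tendsto' L1 L2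
          (fun k => (facts (φ k)).2.2.2.2.2.2 w jw hjw)
      have hid : (2:ℝ)⁻¹ * (1 - lam) ^ 2 + αs * (lam * μs) = (2:ℝ)⁻¹ * (1 - lam ^ 2) := by
        have h : αs * μs = 1 - lam := by rw [hlamdef]; ring
        have h2 : αs * (lam * μs) = lam * (1 - lam) := by rw [← h]; ring
        rw [h2]; ring
      calc ProxObj J αs ustar (lam • ustar)
          = (((2:ℝ)⁻¹ * (1 - lam) ^ 2 : ℝ) : EReal) + (αs : EReal) * J (lam • ustar) := by
            rw [ProxObj, hnrm lam]
        _ ≤ (((2:ℝ)⁻¹ * (1 - lam) ^ 2 : ℝ) : EReal) + (αs : EReal) * ((lam * μs : ℝ) : EReal) :=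
            add_le_add_right (mul_le_mul_of_nonneg_left hJlam
              (by exact_mod_cast hαpos.le : (0:EReal) ≤ (αs:EReal))) _
        _ = (((2:ℝ)⁻¹ * (1 - lam) ^ 2 + αs * (lam * μs) : ℝ) : EReal) := by
            rw [← EReal.coe_mul, ← EReal.coe_add]
        _ ≤ (((2:ℝ)⁻¹ * ‖w - ustar‖ ^ 2 + αs * jw : ℝ) : EReal) := by
            apply EReal.coe_le_coe_iff.mpr
            rw [hid]
            exact hlim
        _ = ProxObj J αs ustar w := by
            rw [ProxObj, hjw, ← EReal.coe_mul, ← EReal.coe_add]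
  -- identify J at the limit point
  have hJu_fin : J ustar ≠ ⊤ := by
    intro htop
    have h := hhom.2 lam hlam0.ne' ustar
    rw [htop, abs_of_pos hlam0, EReal.coe_mul_top_of_pos hlam0] at h
    rw [h] at hJlam
    exact (EReal.coe_lt_top _).not_ge hJlam
  set ju := (J ustar).toReal with hjudef
  have hju : J ustar = ((ju : ℝ) : EReal) := (EReal.coe_toReal hJu_fin (hJbot ustar)).symm
  have hju0 : 0 ≤ ju := by
    have h := hJ0 ustar
    rw [hju] at h
    exact_mod_cast h
  have hquad : ∀ s : ℝ, 0 ≤ s →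
      (2:ℝ)⁻¹ * (1 - lam) ^ 2 + αs * (lam * ju)
        ≤ (2:ℝ)⁻¹ * (1 - s) ^ 2 + αs * (s * ju) := by
    intro s hs
    have h := prox_real hKey (J_smul_coe hhom hlam0.le hju) (J_smul_coe hhom hs hju)
    rw [hnrm lam, hnrm s] at h
    nlinarith [h]
  have hjueq : ju = μs := by
    have hlameq : lam = 1 - αs * ju := by
      by_cases hcase : 0 ≤ 1 - αs * ju
      · have h := hquad (1 - αs * ju) hcase
        have hz : (lam - (1 - αs * ju)) ^ 2 ≤ 0 := by nlinarith [h]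
        have hz0 : (lam - (1 - αs * ju)) ^ 2 = 0 := le_antisymm hz (sq_nonneg _)
        have := (pow_eq_zero_iff two_ne_zero).mp hz0
        linarith [sub_eq_zero.mp this]
      · exfalso
        have h := hquad 0 le_rfl
        push_neg at hcase
        nlinarith [h, hlam0, mul_pos hlam0 (by linarith : (0:ℝ) < αs * ju - 1)]
    have : αs * ju = αs * μs := by rw [hlamdef] at hlameq; linarith
    exact mul_left_cancel₀ hαpos.ne' this
  have hJustar : J ustar = ((μs : ℝ) : EReal) := by rw [hju, hjueq]
  have hαueq : α ustar = αs := hαu ustar hJustar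
  exact ⟨φ, hφ, ustar, hφtend, hustar_norm, lam, hlam0, hlam1, by rw [hαueq]; exact hKey⟩


end
end
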